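/- Let γ : [0,1] → ℝ be Borel measurable and bounded, and define the maximal operator along the curve (t, γ(t)) by 𝔐f(x) = sup_{0 < r ≤ 1} r^{-1} ∫₀^r |f(x₁ − t, x₂ − γ(t))| dt. Suppose that for every p ∈ (1,∞) there is a constant A_p such that ‖𝔐f‖_{L^p(ℝ²)} ≤ A_p ‖f‖_{L^p(ℝ²)} for all f ∈ L^p(ℝ²). Then for every p ∈ (1,2] there is a constant C_p such that for every sequence (f_k)_{k ∈ ℤ} of measurable functions on ℝ², ‖(Σ_{k ∈ ℤ} (𝔐f_k)²)^{1/2}‖_{L^p(ℝ²)} ≤ C_p ‖(Σ_{k ∈ ℤ} |f_k|²)^{1/2}‖_{L^p(ℝ²)}. -/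

import Mathlib

open MeasureTheory Set
open scoped ENNReal

/-- The maximal operator along the curve `(t, γ(t))`:
`𝔐f(x) = sup_{0 < r ≤ 1} r⁻¹ ∫₀^r |f(x₁ − t, x₂ − γ(t))| dt`. -/
noncomputable def curveMax (γ : ℝ → ℝ) (f : ℝ × ℝ → ℂ) (x : ℝ × ℝ) : ℝ≥0∞ :=
  ⨆ r : Set.Ioc (0:ℝ) 1,
    (ENNReal.ofReal (r:ℝ))⁻¹ *
      ∫⁻ t in Set.Ioc (0:ℝ) (r:ℝ), (‖f (x.1 - t, x.2 - γ t)‖₊ : ℝ≥0∞)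

namespace CurveAux

/-- The basic integral along the curve. -/
noncomputable def J (γ : ℝ → ℝ) (u : ℝ × ℝ → ℝ≥0∞) (r : ℝ) (x : ℝ × ℝ) : ℝ≥0∞ :=
  ∫⁻ t in Set.Ioc (0:ℝ) r, u (x.1 - t, x.2 - γ t)

/-- Maximal operator applied to an `ℝ≥0∞`-valued function. -/
noncomputable def mMax (γ : ℝ → ℝ) (u : ℝ × ℝ → ℝ≥0∞) (x : ℝ × ℝ) : ℝ≥0∞ :=
  ⨆ r : Set.Ioc (0:ℝ) 1, (ENNReal.ofReal (r:ℝ))⁻¹ * J γ u (r:ℝ) x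

lemma curveMax_eq (γ : ℝ → ℝ) (f : ℝ × ℝ → ℂ) :
    curveMax γ f = mMax γ (fun y => (‖f y‖₊ : ℝ≥0∞)) := rfl

variable {γ : ℝ → ℝ}

lemma le_mMax (u : ℝ × ℝ → ℝ≥0∞) (x : ℝ × ℝ) (r : Set.Ioc (0:ℝ) 1) :
    (ENNReal.ofReal (r:ℝ))⁻¹ * J γ u (r:ℝ) x ≤ mMax γ u x :=
  le_iSup (fun r : Set.Ioc (0:ℝ) 1 => (ENNReal.ofReal (r:ℝ))⁻¹ * J γ u (r:ℝ) x) r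

lemma meas_comp (hγm : Measurable γ) {u : ℝ × ℝ → ℝ≥0∞} (hu : Measurable u) :
    Measurable (fun z : (ℝ × ℝ) × ℝ => u (z.1.1 - z.2, z.1.2 - γ z.2)) :=
  hu.comp ((measurable_fst.fst.sub measurable_snd).prodMk
    (measurable_fst.snd.sub (hγm.comp measurable_snd)))

lemma meas_comp' (hγm : Measurable γ) {u : ℝ × ℝ → ℝ≥0∞} (hu : Measurable u) (x : ℝ × ℝ) :
    Measurable (fun t : ℝ => u (x.1 - t, x.2 - γ t)) :=
  hu.comp ((measurable_const.sub measurable_id).prodMk (measurable_const.sub hγm))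

lemma measurable_J (hγm : Measurable γ) {u : ℝ × ℝ → ℝ≥0∞} (hu : Measurable u) (r : ℝ) :
    Measurable (fun x => J γ u r x) :=
  Measurable.lintegral_prod_right
    (f := fun (x : ℝ × ℝ) (t : ℝ) => u (x.1 - t, x.2 - γ t)) (meas_comp hγm hu)

lemma J_mono {u : ℝ × ℝ → ℝ≥0∞} {r r' : ℝ} (h : r ≤ r') (x : ℝ × ℝ) :
    J γ u r x ≤ J γ u r' x :=
  lintegral_mono_set (Set.Ioc_subset_Ioc_right h)

lemma J_mono_fun {u v : ℝ × ℝ → ℝ≥0∞} (h : ∀ y, u y ≤ v y) (r : ℝ) (x : ℝ × ℝ) :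
    J γ u r x ≤ J γ v r x :=
  lintegral_mono fun t => h _

/-- Left-continuity of `J` in `r`. -/
lemma J_sup (hγm : Measurable γ) {u : ℝ × ℝ → ℝ≥0∞} (hu : Measurable u)
    {r : ℝ} (hr : 0 < r) (x : ℝ × ℝ) :
    J γ u r x = ⨆ n : ℕ, J γ u (r - r / (n + 2)) x := by
  set w : ℝ → ℝ≥0∞ := fun t => u (x.1 - t, x.2 - γ t) with hw
  have hwm : Measurable w := meas_comp' hγm hu x
  set s : ℕ → ℝ := fun n => r - r / (n + 2) with hs
  have hslt : ∀ n, s n < r := by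
    intro n
    have : 0 < r / ((n:ℝ) + 2) := by positivity
    show r - r / ((n:ℝ) + 2) < r
    linarith
  have hsmono : Monotone s := by
    intro m n hmn
    have h2 : (0:ℝ) < (m:ℝ) + 2 := by positivity
    have h3 : (m:ℝ) + 2 ≤ (n:ℝ) + 2 := by
      have := (Nat.cast_le (α := ℝ)).2 hmn; linarith
    have hdiv : r / ((n:ℝ) + 2) ≤ r / ((m:ℝ) + 2) := by
      gcongr
    show r - r / ((m:ℝ) + 2) ≤ r - r / ((n:ℝ) + 2)
    linarith
  have key : ∀ t : ℝ, (Set.Ioo (0:ℝ) r).indicator w t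
      = ⨆ n : ℕ, (Set.Ioc (0:ℝ) (s n)).indicator w t := by
    intro t
    by_cases ht : t ∈ Set.Ioo (0:ℝ) r
    · rw [Set.indicator_of_mem ht]
      have hex : ∃ n : ℕ, t ≤ s n := by
        obtain ⟨N, hN⟩ := exists_nat_gt (r / (r - t))
        refine ⟨N, ?_⟩
        have hrt : 0 < r - t := by have := ht.2; linarith
        have hN2 : r / (r - t) < (N:ℝ) + 2 := by linarith
        have hlt : r / ((N:ℝ) + 2) < r - t := by
          rw [div_lt_iff₀ (by positivity)]
          calc r = (r / (r - t)) * (r - t) := by field_simp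
          _ < ((N:ℝ) + 2) * (r - t) := mul_lt_mul_of_pos_right hN2 hrt
          _ = (r - t) * ((N:ℝ) + 2) := by ring
        show t ≤ r - r / ((N:ℝ) + 2)
        linarith
      obtain ⟨n, hn⟩ := hex
      apply le_antisymm
      · refine le_iSup_of_le n ?_
        rw [Set.indicator_of_mem (show t ∈ Set.Ioc (0:ℝ) (s n) from ⟨ht.1, hn⟩) w]
      · apply iSup_le
        intro m
        by_cases htm : t ∈ Set.Ioc (0:ℝ) (s m)
        · rw [Set.indicator_of_mem htm]
        · rw [Set.indicator_of_notMem htm]; exact zero_le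
    · rw [Set.indicator_of_notMem ht]
      symm
      apply le_antisymm _ zero_le
      apply iSup_le
      intro m
      rw [Set.indicator_of_notMem
        (fun hmem => ht ⟨hmem.1, lt_of_le_of_lt hmem.2 (hslt m)⟩)]
  have h1 : J γ u r x = ∫⁻ t in Set.Ioo (0:ℝ) r, w t :=
    (setLIntegral_congr Ioo_ae_eq_Ioc).symm
  rw [h1, ← lintegral_indicator measurableSet_Ioo]
  rw [lintegral_congr key, lintegral_iSup
    (fun n => hwm.indicator measurableSet_Ioc)
    (fun m n hmn => Set.indicator_le_indicator_of_subset
      (Set.Ioc_subset_Ioc_right (hsmono hmn)) (fun _ => zero_le))]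
  exact iSup_congr fun n => lintegral_indicator measurableSet_Ioc w

lemma avg_lt_rat (hγm : Measurable γ) {u : ℝ × ℝ → ℝ≥0∞} (hu : Measurable u)
    {r : ℝ} (hr0 : 0 < r) (hr1 : r ≤ 1) (x : ℝ × ℝ) {c : ℝ≥0∞}
    (hc : c < (ENNReal.ofReal r)⁻¹ * J γ u r x) :
    ∃ q : ℚ, 0 < (q:ℝ) ∧ (q:ℝ) ≤ 1 ∧ c < (ENNReal.ofReal (q:ℝ))⁻¹ * J γ u (q:ℝ) x := by
  rw [J_sup hγm hu hr0, ENNReal.mul_iSup] at hc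
  rw [lt_iSup_iff] at hc
  obtain ⟨n, hn⟩ := hc
  have hpos : 0 < r / ((n:ℝ) + 2) := by positivity
  have hlt : r / ((n:ℝ) + 2) < r := by
    rw [div_lt_iff₀ (by positivity)]
    nlinarith
  have hsn_pos : 0 < r - r / ((n:ℝ) + 2) := by linarith
  have hsn_lt : r - r / ((n:ℝ) + 2) < r := by linarith
  obtain ⟨q, hq1, hq2⟩ := exists_rat_btwn hsn_lt
  refine ⟨q, lt_trans hsn_pos hq1, le_trans hq2.le hr1, ?_⟩
  refine lt_of_lt_of_le hn (mul_le_mul' ?_ ?_)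
  · exact ENNReal.inv_le_inv.2 (ENNReal.ofReal_le_ofReal hq2.le)
  · exact J_mono hq1.le x

lemma mMax_eq_ratSup (hγm : Measurable γ) {u : ℝ × ℝ → ℝ≥0∞} (hu : Measurable u) (x : ℝ × ℝ) :
    mMax γ u x = ⨆ q : {q : ℚ // 0 < (q:ℝ) ∧ (q:ℝ) ≤ 1},
      (ENNReal.ofReal (q:ℝ))⁻¹ * J γ u (q:ℝ) x := by
  apply le_antisymm
  · apply iSup_le
    rintro ⟨r, hr0, hr1⟩
    by_contra hcon
    push_neg at hcon
    obtain ⟨q, hq0, hq1, hq⟩ := avg_lt_rat hγm hu hr0 hr1 x hcon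
    have h1 : (ENNReal.ofReal (q:ℝ))⁻¹ * J γ u (q:ℝ) x
        ≤ ⨆ q : {q : ℚ // 0 < (q:ℝ) ∧ (q:ℝ) ≤ 1},
          (ENNReal.ofReal (q:ℝ))⁻¹ * J γ u (q:ℝ) x :=
      le_iSup (fun q : {q : ℚ // 0 < (q:ℝ) ∧ (q:ℝ) ≤ 1} =>
        (ENNReal.ofReal (q:ℝ))⁻¹ * J γ u (q:ℝ) x) ⟨q, hq0, hq1⟩
    exact absurd h1 (not_le.2 hq)
  · apply iSup_le
    rintro ⟨q, hq0, hq1⟩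
    exact le_mMax u x ⟨(q:ℝ), hq0, hq1⟩

lemma measurable_mMax (hγm : Measurable γ) {u : ℝ × ℝ → ℝ≥0∞} (hu : Measurable u) :
    Measurable (mMax γ u) := by
  have heq : mMax γ u = fun x => ⨆ q : {q : ℚ // 0 < (q:ℝ) ∧ (q:ℝ) ≤ 1},
      (ENNReal.ofReal (q:ℝ))⁻¹ * J γ u (q:ℝ) x := funext (mMax_eq_ratSup hγm hu)
  rw [heq]
  exact Measurable.iSup fun q => measurable_const.mul (measurable_J hγm hu _)

lemma mMax_le_add (hγm : Measurable γ) {u v w : ℝ × ℝ → ℝ≥0∞}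
    (hu : Measurable u) (h : ∀ y, w y ≤ u y + v y) (x : ℝ × ℝ) :
    mMax γ w x ≤ mMax γ u x + mMax γ v x := by
  apply iSup_le
  rintro ⟨r, hr⟩
  have h1 : J γ w r x ≤ J γ u r x + J γ v r x := by
    calc J γ w r x ≤ ∫⁻ t in Set.Ioc (0:ℝ) r,
        (u (x.1 - t, x.2 - γ t) + v (x.1 - t, x.2 - γ t)) := lintegral_mono fun t => h _
    _ = J γ u r x + J γ v r x := lintegral_add_left (meas_comp' hγm hu x) _
  calc (ENNReal.ofReal (r:ℝ))⁻¹ * J γ w r x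
      ≤ (ENNReal.ofReal (r:ℝ))⁻¹ * (J γ u r x + J γ v r x) := mul_le_mul' le_rfl h1
    _ = (ENNReal.ofReal (r:ℝ))⁻¹ * J γ u r x + (ENNReal.ofReal (r:ℝ))⁻¹ * J γ v r x :=
        mul_add _ _ _
    _ ≤ mMax γ u x + mMax γ v x := add_le_add (le_mMax u x ⟨r, hr⟩) (le_mMax v x ⟨r, hr⟩)

/-- Hölder's inequality through the maximal operator. -/
lemma mMax_holder (hγm : Measurable γ) {u v w : ℝ × ℝ → ℝ≥0∞}
    (hu : Measurable u) (hv : Measurable v) {α β : ℝ}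
    (hα : 0 < α) (hβ : 0 < β) (hαβ : α + β = 1)
    (hpt : ∀ y, w y ≤ u y ^ α * v y ^ β) (x : ℝ × ℝ) :
    mMax γ w x ≤ (mMax γ u x) ^ α * (mMax γ v x) ^ β := by
  apply iSup_le
  rintro ⟨r, hr0, hr1⟩
  set z := (ENNReal.ofReal r)⁻¹ with hz
  have hz0 : z ≠ 0 := by
    simp only [hz, ne_eq, ENNReal.inv_eq_zero]
    exact ENNReal.ofReal_ne_top
  have hzt : z ≠ ⊤ := by
    simp only [hz, ne_eq, ENNReal.inv_eq_top]
    exact (ENNReal.ofReal_pos.2 hr0).ne'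
  have hα1 : (1:ℝ) < 1 / α := by
    rw [lt_div_iff₀ hα]; linarith
  have hconj : (1/α).HolderConjugate (1/β) := by
    rw [Real.holderConjugate_iff]
    constructor
    · exact hα1
    · simp only [one_div, inv_inv]; linarith
  have hJ : J γ w r x ≤ (J γ u r x) ^ α * (J γ v r x) ^ β := by
    have h0 : J γ w r x ≤ ∫⁻ t in Set.Ioc (0:ℝ) r,
        ((fun t => u (x.1 - t, x.2 - γ t) ^ α) * (fun t => v (x.1 - t, x.2 - γ t) ^ β)) t :=
      lintegral_mono fun t => hpt _
    have h1 := ENNReal.lintegral_mul_le_Lp_mul_Lq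
      (volume.restrict (Set.Ioc (0:ℝ) r)) hconj
      (((meas_comp' hγm hu x).pow_const α).aemeasurable)
      (((meas_comp' hγm hv x).pow_const β).aemeasurable)
    refine h0.trans (h1.trans ?_)
    have e1 : ∀ t : ℝ, (u (x.1 - t, x.2 - γ t) ^ α) ^ (1/α) = u (x.1 - t, x.2 - γ t) := by
      intro t
      rw [← ENNReal.rpow_mul, mul_one_div_cancel hα.ne', ENNReal.rpow_one]
    have e2 : ∀ t : ℝ, (v (x.1 - t, x.2 - γ t) ^ β) ^ (1/β) = v (x.1 - t, x.2 - γ t) := by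
      intro t
      rw [← ENNReal.rpow_mul, mul_one_div_cancel hβ.ne', ENNReal.rpow_one]
    rw [lintegral_congr e1, lintegral_congr e2, one_div_one_div, one_div_one_div]
    exact le_rfl
  have hzsplit : z = z ^ α * z ^ β := by
    rw [← ENNReal.rpow_add α β hz0 hzt, hαβ, ENNReal.rpow_one]
  calc z * J γ w r x ≤ z * ((J γ u r x) ^ α * (J γ v r x) ^ β) := mul_le_mul' le_rfl hJ
    _ = (z * J γ u r x) ^ α * (z * J γ v r x) ^ β := by
        rw [ENNReal.mul_rpow_of_nonneg _ _ hα.le, ENNReal.mul_rpow_of_nonneg _ _ hβ.le]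
        conv_lhs => rw [hzsplit]
        ring
    _ ≤ (mMax γ u x) ^ α * (mMax γ v x) ^ β := by
        apply mul_le_mul'
        · exact ENNReal.rpow_le_rpow (le_mMax u x ⟨r, hr0, hr1⟩) hα.le
        · exact ENNReal.rpow_le_rpow (le_mMax v x ⟨r, hr0, hr1⟩) hβ.le

/-- Transfer of the scalar `L^q` hypothesis to `ℝ≥0∞`-valued functions. -/
lemma lp_bound (hγm : Measurable γ) {q A : ℝ} (hq : 1 < q)
    (hbound : ∀ f : ℝ × ℝ → ℂ, Measurable f →
      (∫⁻ x, (curveMax γ f x) ^ q) ^ (1/q)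
        ≤ ENNReal.ofReal A * (∫⁻ x, ((‖f x‖₊ : ℝ≥0∞)) ^ q) ^ (1/q))
    {w : ℝ × ℝ → ℝ≥0∞} (hw : Measurable w) (hfin : ∀ x, w x ≠ ⊤) :
    ∫⁻ x, (mMax γ w x) ^ q ≤ (ENNReal.ofReal A) ^ q * ∫⁻ x, (w x) ^ q := by
  have hq0 : (0:ℝ) < q := lt_trans one_pos hq
  set F : ℝ × ℝ → ℂ := fun x => ((w x).toReal : ℂ) with hF
  have hFm : Measurable F :=
    Complex.measurable_ofReal.comp (ENNReal.measurable_toReal.comp hw)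
  have hFn : ∀ y, (‖F y‖₊ : ℝ≥0∞) = w y := by
    intro y
    simp only [hF]
    rw [Complex.nnnorm_real, ← enorm_eq_nnnorm, Real.enorm_eq_ofReal ENNReal.toReal_nonneg,
      ENNReal.ofReal_toReal (hfin y)]
  have hcm : curveMax γ F = mMax γ w := by
    have hfeq : (fun y => (‖F y‖₊ : ℝ≥0∞)) = w := funext hFn
    rw [curveMax_eq, hfeq]
  have h1 := hbound F hFm
  rw [hcm] at h1
  have h2 : (∫⁻ x, ((‖F x‖₊ : ℝ≥0∞)) ^ q) = ∫⁻ x, (w x) ^ q :=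
    lintegral_congr fun x => by rw [hFn]
  rw [h2] at h1
  have h3 := ENNReal.rpow_le_rpow h1 hq0.le
  rw [← ENNReal.rpow_mul, one_div_mul_cancel hq0.ne', ENNReal.rpow_one] at h3
  rw [ENNReal.mul_rpow_of_nonneg _ _ hq0.le, ← ENNReal.rpow_mul,
    one_div_mul_cancel hq0.ne', ENNReal.rpow_one] at h3
  exact h3

/-- The maximal function of a function supported on a null set vanishes a.e. -/
lemma mMax_null (hγm : Measurable γ) {S : Set (ℝ × ℝ)} (hSm : MeasurableSet S)
    (hS0 : volume S = 0) :
    ∀ᵐ x : ℝ × ℝ, mMax γ (S.indicator (fun _ => (⊤:ℝ≥0∞))) x = 0 := by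
  set F : ℝ × ℝ → ℝ≥0∞ := S.indicator (fun _ => (⊤:ℝ≥0∞)) with hF
  have hFm : Measurable F := measurable_const.indicator hSm
  have hint : ∫⁻ x : ℝ × ℝ, J γ F 1 x = 0 := by
    have hswap := lintegral_lintegral_swap
      (μ := (volume : Measure (ℝ × ℝ))) (ν := volume.restrict (Set.Ioc (0:ℝ) 1))
      (f := fun (x : ℝ × ℝ) (t : ℝ) => F (x.1 - t, x.2 - γ t))
      ((meas_comp hγm hFm).aemeasurable)
    rw [show (fun x : ℝ × ℝ => J γ F 1 x)
      = fun x : ℝ × ℝ => ∫⁻ t in Set.Ioc (0:ℝ) 1, F (x.1 - t, x.2 - γ t) from rfl]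
    rw [hswap]
    have hzero : ∀ t : ℝ, (∫⁻ x : ℝ × ℝ, F (x.1 - t, x.2 - γ t)) = 0 := by
      intro t
      have heq : (fun x : ℝ × ℝ => F (x.1 - t, x.2 - γ t))
          = fun x : ℝ × ℝ => F (x - (t, γ t)) := rfl
      rw [heq, lintegral_sub_right_eq_self F (t, γ t)]
      rw [hF, lintegral_indicator hSm, setLIntegral_const, hS0, mul_zero]
    simp only [hzero, lintegral_zero]
  have hae := (lintegral_eq_zero_iff (measurable_J hγm hFm 1)).1 hint
  filter_upwards [hae] with x hx
  simp only [Pi.zero_apply] at hx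
  apply le_antisymm _ zero_le
  apply iSup_le
  rintro ⟨r, hr0, hr1⟩
  have h1 : J γ F r x ≤ J γ F 1 x := J_mono hr1 x
  have h2 : J γ F r x = 0 := le_antisymm (h1.trans_eq hx) zero_le
  rw [h2, mul_zero]

/-- `x^(a+b) = x^a * x^b` for positive exponents, valid for all `x : ℝ≥0∞`. -/
lemma rpow_add_pos (X : ℝ≥0∞) {a b : ℝ} (ha : 0 < a) (hb : 0 < b) :
    X ^ (a + b) = X ^ a * X ^ b := by
  rcases eq_or_ne X 0 with rfl | hX0
  · rw [ENNReal.zero_rpow_of_pos ha, ENNReal.zero_rpow_of_pos hb,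
      ENNReal.zero_rpow_of_pos (by linarith), zero_mul]
  rcases eq_or_ne X ⊤ with rfl | hXt
  · rw [ENNReal.top_rpow_of_pos ha, ENNReal.top_rpow_of_pos hb,
      ENNReal.top_rpow_of_pos (by linarith), ENNReal.top_mul_top]
  exact ENNReal.rpow_add a b hX0 hXt

end CurveAux
open CurveAux

/-- If `𝔐` is bounded on `L^p(ℝ²)` for every `p ∈ (1,∞)`, then for
`p ∈ (1,2]` the vector-valued (`ℓ²`-valued) estimate
`‖(Σ_k (𝔐f_k)²)^{1/2}‖_p ≤ C_p ‖(Σ_k |f_k|²)^{1/2}‖_p` holds. -/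
theorem stmt_13 (γ : ℝ → ℝ) (hγm : Measurable γ)
    (hγb : ∃ M : ℝ, ∀ t ∈ Set.Icc (0:ℝ) 1, |γ t| ≤ M)
    (hyp : ∀ p : ℝ, 1 < p → ∃ A : ℝ, 0 < A ∧
      ∀ f : ℝ × ℝ → ℂ, Measurable f →
        (∫⁻ x, (curveMax γ f x) ^ p) ^ (1/p)
          ≤ ENNReal.ofReal A * (∫⁻ x, ((‖f x‖₊ : ℝ≥0∞)) ^ p) ^ (1/p)) :
    ∀ p : ℝ, 1 < p → p ≤ 2 → ∃ C : ℝ, 0 < C ∧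
      ∀ f : ℤ → ℝ × ℝ → ℂ, (∀ k, Measurable (f k)) →
        (∫⁻ x, (∑' k : ℤ, (curveMax γ (f k) x) ^ (2:ℕ)) ^ (p/2)) ^ (1/p)
          ≤ ENNReal.ofReal C *
            (∫⁻ x, (∑' k : ℤ, ((‖f k x‖₊ : ℝ≥0∞)) ^ (2:ℕ)) ^ (p/2)) ^ (1/p) := by
  intro p hp1 hp2
  obtain ⟨A, hA0, hA⟩ := hyp p hp1
  set c : ℝ≥0∞ := ENNReal.ofReal A with hc
  have hc0 : c ≠ 0 := by
    simp only [hc, ne_eq, ENNReal.ofReal_eq_zero, not_le]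
    exact hA0
  have hp0 : (0:ℝ) < p := by linarith
  refine ⟨A, hA0, ?_⟩
  intro f hf
  set u : ℤ → ℝ × ℝ → ℝ≥0∞ := fun k y => (‖f k y‖₊ : ℝ≥0∞) with hu
  have hum : ∀ k, Measurable (u k) := fun k => (hf k).nnnorm.coe_nnreal_ennreal
  have hufin : ∀ k y, u k y ≠ ⊤ := fun k y => ENNReal.coe_ne_top
  set D : ℝ × ℝ → ℝ≥0∞ := fun x => ∑' k : ℤ, (u k x) ^ (2:ℕ) with hD
  have hDm : Measurable D := Measurable.ennreal_tsum fun k => (hum k).pow_const 2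
  have hcurve : ∀ k, curveMax γ (f k) = mMax γ (u k) := fun k => curveMax_eq γ (f k)
  simp only [hcurve]
  set R : ℝ≥0∞ := ∫⁻ x, (D x) ^ (p/2) with hR
  by_cases hRtop : R = ⊤
  · rw [hRtop, ENNReal.top_rpow_of_pos (by positivity), ENNReal.mul_top hc0]
    exact le_top
  -- the exceptional null set where `D = ∞`
  set S : Set (ℝ × ℝ) := {x | D x = ⊤} with hS
  have hSm : MeasurableSet S := hDm (measurableSet_singleton ⊤)
  have hS0 : volume S = 0 := by
    have h1 : ∀ᵐ x : ℝ × ℝ, (D x) ^ (p/2) < ⊤ :=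
      ae_lt_top (hDm.pow_const _) hRtop
    have h2 : ∀ᵐ x : ℝ × ℝ, ¬ (D x = ⊤) := by
      filter_upwards [h1] with x hx
      intro hxS
      rw [hxS, ENNReal.top_rpow_of_pos (by positivity)] at hx
      exact absurd hx (lt_irrefl _)
    rw [ae_iff] at h2
    simpa using h2
  rcases eq_or_lt_of_le hp2 with hp2' | hp2'
  · -- case p = 2 : termwise
    subst hp2'
    have h21 : (2:ℝ)/2 = 1 := by norm_num
    simp only [h21, ENNReal.rpow_one]
    have hswap : ∫⁻ x, (∑' k : ℤ, (mMax γ (u k) x) ^ (2:ℕ))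
        = ∑' k : ℤ, ∫⁻ x, (mMax γ (u k) x) ^ (2:ℕ) :=
      lintegral_tsum fun k =>
        ((measurable_mMax hγm (hum k)).pow_const 2).aemeasurable
    have hterm : ∀ k : ℤ, ∫⁻ x, (mMax γ (u k) x) ^ (2:ℕ)
        ≤ c ^ (2:ℝ) * ∫⁻ x, (u k x) ^ (2:ℕ) := by
      intro k
      have hb := lp_bound hγm hp1 hA (hum k) (hufin k)
      have e1 : (∫⁻ x, (mMax γ (u k) x) ^ (2:ℕ))
          = ∫⁻ x, (mMax γ (u k) x) ^ (2:ℝ) :=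
        lintegral_congr fun x => by
          rw [show ((2:ℝ)) = ((2:ℕ):ℝ) by norm_num, ENNReal.rpow_natCast]
      have e2 : (∫⁻ x, (u k x) ^ (2:ℕ)) = ∫⁻ x, (u k x) ^ (2:ℝ) :=
        lintegral_congr fun x => by
          rw [show ((2:ℝ)) = ((2:ℕ):ℝ) by norm_num, ENNReal.rpow_natCast]
      rw [e1, e2]
      exact hb
    have hsum : ∫⁻ x, (∑' k : ℤ, (mMax γ (u k) x) ^ (2:ℕ)) ≤ c ^ (2:ℝ) * R := by
      rw [hswap]
      calc ∑' k : ℤ, ∫⁻ x, (mMax γ (u k) x) ^ (2:ℕ)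
          ≤ ∑' k : ℤ, c ^ (2:ℝ) * ∫⁻ x, (u k x) ^ (2:ℕ) :=
            ENNReal.tsum_le_tsum hterm
        _ = c ^ (2:ℝ) * ∑' k : ℤ, ∫⁻ x, (u k x) ^ (2:ℕ) := ENNReal.tsum_mul_left
        _ = c ^ (2:ℝ) * ∫⁻ x, ∑' k : ℤ, (u k x) ^ (2:ℕ) := by
            rw [← lintegral_tsum fun k => ((hum k).pow_const 2).aemeasurable]
        _ = c ^ (2:ℝ) * R := by
            rw [hR]
            congr 1
            exact (lintegral_congr fun x => by rw [h21, ENNReal.rpow_one]).symm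
    calc (∫⁻ x, (∑' k : ℤ, (mMax γ (u k) x) ^ (2:ℕ))) ^ (1/(2:ℝ))
        ≤ (c ^ (2:ℝ) * R) ^ (1/(2:ℝ)) := ENNReal.rpow_le_rpow hsum (by norm_num)
      _ = c * R ^ (1/(2:ℝ)) := by
          rw [ENNReal.mul_rpow_of_nonneg _ _ (by norm_num : (0:ℝ) ≤ 1/2),
            ← ENNReal.rpow_mul]
          norm_num
  · -- case p < 2
    have h2p : (0:ℝ) < 2 - p := by linarith
    -- truncated functions
    have hScm : MeasurableSet Sᶜ := hSm.compl
    set u' : ℤ → ℝ × ℝ → ℝ≥0∞ := fun k => (Sᶜ).indicator (u k) with hu'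
    have hu'm : ∀ k, Measurable (u' k) := fun k => (hum k).indicator hScm
    set D' : ℝ × ℝ → ℝ≥0∞ := (Sᶜ).indicator D with hD'
    have hD'm : Measurable D' := hDm.indicator hScm
    have hD'fin : ∀ x, D' x ≠ ⊤ := by
      intro x
      by_cases hx : x ∈ Sᶜ
      · rw [hD', Set.indicator_of_mem hx]
        exact hx
      · rw [hD', Set.indicator_of_notMem hx]
        exact ENNReal.zero_ne_top
    have hsum' : ∀ x, (∑' k : ℤ, (u' k x) ^ (2:ℕ)) = D' x := by
      intro x
      by_cases hx : x ∈ Sᶜ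
      · rw [hD', Set.indicator_of_mem hx]
        simp only [hu', Set.indicator_of_mem hx]
        rfl
      · rw [hD', Set.indicator_of_notMem hx]
        simp only [hu', Set.indicator_of_notMem hx]
        simp
    have hle2 : ∀ (k : ℤ) x, (u' k x) ^ (2:ℕ) ≤ D' x := by
      intro k x
      rw [← hsum' x]
      exact ENNReal.le_tsum k
    have hu'fin : ∀ (k : ℤ) x, u' k x ≠ ⊤ := by
      intro k x
      by_cases hx : x ∈ Sᶜ
      · simp only [hu', Set.indicator_of_mem hx]; exact hufin k x
      · simp only [hu', Set.indicator_of_notMem hx]; exact ENNReal.zero_ne_top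
    -- auxiliary functions
    set τ : ℝ := (2 - p) / (2 * p) with hτ
    have hτpos : 0 < τ := by positivity
    set h : ℤ → ℝ × ℝ → ℝ≥0∞ := fun k x => (u' k x) ^ (2/p) * ((D' x) ^ τ)⁻¹ with hh
    have hhm : ∀ k, Measurable (h k) := fun k =>
      ((hu'm k).pow_const _).mul ((hD'm.pow_const _).inv)
    set g : ℝ × ℝ → ℝ≥0∞ := fun x => (D' x) ^ ((1:ℝ)/2) with hg
    have hgm : Measurable g := hD'm.pow_const _
    have hgfin : ∀ x, g x ≠ ⊤ := fun x =>
      ENNReal.rpow_ne_top_of_nonneg (by norm_num) (hD'fin x)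
    -- pointwise decomposition
    have hdecomp : ∀ (k : ℤ) y, u' k y ≤ (h k y) ^ (p/2) * (g y) ^ ((2-p)/2) := by
      intro k y
      have hRW : (h k y) ^ (p/2) * (g y) ^ ((2-p)/2)
          = u' k y * (((D' y) ^ ((2-p)/4))⁻¹ * (D' y) ^ ((2-p)/4)) := by
        rw [hh, hg]
        simp only []
        rw [ENNReal.mul_rpow_of_nonneg _ _ (by positivity : (0:ℝ) ≤ p/2)]
        rw [← ENNReal.rpow_mul (u' k y), ENNReal.inv_rpow, ← ENNReal.rpow_mul (D' y),
          ← ENNReal.rpow_mul (D' y)]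
        have e1 : (2/p) * (p/2) = 1 := by field_simp
        have e2 : τ * (p/2) = (2-p)/4 := by rw [hτ]; field_simp; ring
        have e3 : (1:ℝ)/2 * ((2-p)/2) = (2-p)/4 := by ring
        rw [e1, e2, e3, ENNReal.rpow_one, mul_assoc]
      rw [hRW]
      by_cases hb0 : D' y = 0
      · have he0 : u' k y = 0 := by
          have := hle2 k y
          rw [hb0, le_zero_iff] at this
          exact pow_eq_zero_iff (two_ne_zero) |>.1 this
        rw [he0, zero_mul]
      · have hbt := hD'fin y
        have h1 : (D' y) ^ ((2-p)/4) ≠ 0 :=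
          (ENNReal.rpow_pos (pos_iff_ne_zero.2 hb0) hbt).ne'
        have h2 : (D' y) ^ ((2-p)/4) ≠ ⊤ :=
          ENNReal.rpow_ne_top_of_nonneg (by positivity) hbt
        rw [ENNReal.inv_mul_cancel h1 h2, mul_one]
    -- the h_k sum up correctly
    have hsum_h : ∀ x, (∑' k : ℤ, (h k x) ^ p) = (D' x) ^ (p/2) := by
      intro x
      have hterm : ∀ k : ℤ, (h k x) ^ p
          = (u' k x) ^ (2:ℕ) * ((D' x) ^ ((2-p)/2))⁻¹ := by
        intro k
        rw [hh]
        simp only []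
        rw [ENNReal.mul_rpow_of_nonneg _ _ hp0.le,
          ← ENNReal.rpow_mul (u' k x), ENNReal.inv_rpow, ← ENNReal.rpow_mul (D' x)]
        have e1 : (2/p) * p = 2 := by field_simp
        have e2 : τ * p = (2-p)/2 := by rw [hτ]; field_simp
        rw [e1, e2]
        congr 1
        rw [show ((2:ℝ)) = ((2:ℕ):ℝ) by norm_num, ENNReal.rpow_natCast]
      rw [tsum_congr hterm, ENNReal.tsum_mul_right, hsum' x]
      by_cases hb0 : D' x = 0
      · rw [hb0, ENNReal.zero_rpow_of_pos (by positivity), zero_mul,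
          ENNReal.zero_rpow_of_pos (by positivity)]
      · have hbt := hD'fin x
        rw [← ENNReal.rpow_neg]
        nth_rewrite 1 [← ENNReal.rpow_one (D' x)]
        rw [← ENNReal.rpow_add _ _ hb0 hbt]
        congr 1
        ring
    have hgp : ∀ x, (g x) ^ p = (D' x) ^ (p/2) := by
      intro x
      rw [hg]
      simp only []
      rw [← ENNReal.rpow_mul (D' x)]
      congr 1
      ring
    have hhfin : ∀ (k : ℤ) x, h k x ≠ ⊤ := by
      intro k x
      rw [hh]
      simp only []
      by_cases hb0 : D' x = 0
      · have he0 : u' k x = 0 := by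
          have := hle2 k x
          rw [hb0, le_zero_iff] at this
          exact pow_eq_zero_iff (two_ne_zero) |>.1 this
        rw [he0, ENNReal.zero_rpow_of_pos (by positivity), zero_mul]
        exact ENNReal.zero_ne_top
      · apply ENNReal.mul_ne_top
        · exact ENNReal.rpow_ne_top_of_nonneg (by positivity) (hu'fin k x)
        · rw [ENNReal.inv_ne_top]
          exact (ENNReal.rpow_pos (pos_iff_ne_zero.2 hb0) (hD'fin x)).ne'
    -- integrals of building blocks
    have hD'R : ∫⁻ x, (D' x) ^ (p/2) ≤ R := by
      rw [hR]
      apply lintegral_mono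
      intro x
      apply ENNReal.rpow_le_rpow _ (by positivity)
      exact Set.indicator_le_self _ _ x
    set P : ℝ × ℝ → ℝ≥0∞ := fun x => ∑' k : ℤ, (mMax γ (h k) x) ^ p with hP
    have hPm : Measurable P :=
      Measurable.ennreal_tsum fun k => (measurable_mMax hγm (hhm k)).pow_const p
    have hPint : ∫⁻ x, P x ≤ c ^ p * R := by
      rw [hP]
      simp only []
      rw [lintegral_tsum fun k =>
        ((measurable_mMax hγm (hhm k)).pow_const p).aemeasurable]
      calc ∑' k : ℤ, ∫⁻ x, (mMax γ (h k) x) ^ p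
          ≤ ∑' k : ℤ, c ^ p * ∫⁻ x, (h k x) ^ p :=
            ENNReal.tsum_le_tsum fun k => lp_bound hγm hp1 hA (hhm k) (hhfin k)
        _ = c ^ p * ∑' k : ℤ, ∫⁻ x, (h k x) ^ p := ENNReal.tsum_mul_left
        _ = c ^ p * ∫⁻ x, ∑' k : ℤ, (h k x) ^ p := by
            rw [← lintegral_tsum fun k => ((hhm k).pow_const p).aemeasurable]
        _ = c ^ p * ∫⁻ x, (D' x) ^ (p/2) := by rw [lintegral_congr hsum_h]
        _ ≤ c ^ p * R := mul_le_mul' le_rfl hD'R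
    have hGint : ∫⁻ x, (mMax γ g x) ^ p ≤ c ^ p * R := by
      calc ∫⁻ x, (mMax γ g x) ^ p ≤ c ^ p * ∫⁻ x, (g x) ^ p :=
          lp_bound hγm hp1 hA hgm hgfin
        _ = c ^ p * ∫⁻ x, (D' x) ^ (p/2) := by rw [lintegral_congr hgp]
        _ ≤ c ^ p * R := mul_le_mul' le_rfl hD'R
    -- the pointwise (a.e.) estimate
    have hFS : ∀ (k : ℤ) y, u k y ≤ u' k y + (S.indicator (fun _ => (⊤:ℝ≥0∞))) y := by
      intro k y
      by_cases hy : y ∈ S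
      · simp [Set.indicator_of_mem hy]
      · rw [Set.indicator_of_notMem hy, add_zero]
        simp only [hu']
        rw [Set.indicator_of_mem (show y ∈ Sᶜ from hy)]
    have hae : ∀ᵐ x : ℝ × ℝ, (∑' k : ℤ, (mMax γ (u k) x) ^ (2:ℕ)) ^ (p/2)
        ≤ (P x) ^ (p/2) * ((mMax γ g x) ^ (2-p)) ^ (p/2) := by
      filter_upwards [mMax_null hγm hSm hS0] with x hx
      have huk : ∀ k : ℤ, mMax γ (u k) x ≤ mMax γ (u' k) x := by
        intro k
        have h1 := mMax_le_add hγm (hu'm k) (hFS k) x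
        rwa [hx, add_zero] at h1
      have hkey : ∀ k : ℤ, (mMax γ (u k) x) ^ (2:ℕ)
          ≤ (mMax γ (h k) x) ^ p * (mMax γ g x) ^ (2-p) := by
        intro k
        have h2 := mMax_holder hγm (hhm k) hgm (by positivity : (0:ℝ) < p/2)
          (by positivity : (0:ℝ) < (2-p)/2) (by ring) (hdecomp k) x
        have h3 : (mMax γ (u k) x) ^ (2:ℕ)
            ≤ ((mMax γ (h k) x) ^ (p/2) * (mMax γ g x) ^ ((2-p)/2)) ^ (2:ℕ) :=
          pow_le_pow_left₀ zero_le ((huk k).trans h2) 2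
        refine h3.trans_eq ?_
        rw [← ENNReal.rpow_natCast _ 2]
        rw [show (((2:ℕ)):ℝ) = (2:ℝ) by norm_num]
        rw [ENNReal.mul_rpow_of_nonneg _ _ (by norm_num : (0:ℝ) ≤ 2),
          ← ENNReal.rpow_mul, ← ENNReal.rpow_mul]
        congr 2 <;> ring
      calc (∑' k : ℤ, (mMax γ (u k) x) ^ (2:ℕ)) ^ (p/2)
          ≤ (∑' k : ℤ, (mMax γ (h k) x) ^ p * (mMax γ g x) ^ (2-p)) ^ (p/2) :=
            ENNReal.rpow_le_rpow (ENNReal.tsum_le_tsum hkey) (by positivity)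
        _ = (P x * (mMax γ g x) ^ (2-p)) ^ (p/2) := by
            rw [ENNReal.tsum_mul_right, hP]
        _ = (P x) ^ (p/2) * ((mMax γ g x) ^ (2-p)) ^ (p/2) :=
            ENNReal.mul_rpow_of_nonneg _ _ (by positivity)
    -- main integral estimate via Hölder
    have hconj : ((2:ℝ)/p).HolderConjugate (2/(2-p)) := by
      rw [Real.holderConjugate_iff]
      constructor
      · rw [lt_div_iff₀ hp0]; linarith
      · rw [inv_div, inv_div]; linarith
    have hmain : ∫⁻ x, (∑' k : ℤ, (mMax γ (u k) x) ^ (2:ℕ)) ^ (p/2) ≤ c ^ p * R := by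
      have hH := ENNReal.lintegral_mul_le_Lp_mul_Lq (volume : Measure (ℝ × ℝ)) hconj
        ((hPm.pow_const (p/2)).aemeasurable)
        ((((measurable_mMax hγm hgm).pow_const (2-p)).pow_const (p/2)).aemeasurable)
      simp only [Pi.mul_apply] at hH
      have e1 : (∫⁻ x, ((P x) ^ (p/2)) ^ ((2:ℝ)/p)) = ∫⁻ x, P x :=
        lintegral_congr fun x => by
          rw [← ENNReal.rpow_mul]
          have : (p/2) * (2/p) = 1 := by field_simp
          rw [this, ENNReal.rpow_one]
      have e2 : (∫⁻ x, (((mMax γ g x) ^ ((2:ℝ)-p)) ^ (p/2)) ^ ((2:ℝ)/(2-p)))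
          = ∫⁻ x, (mMax γ g x) ^ p :=
        lintegral_congr fun x => by
          rw [← ENNReal.rpow_mul, ← ENNReal.rpow_mul]
          congr 1
          field_simp
      rw [e1, e2, one_div_div, one_div_div] at hH
      calc ∫⁻ x, (∑' k : ℤ, (mMax γ (u k) x) ^ (2:ℕ)) ^ (p/2)
          ≤ ∫⁻ x, (P x) ^ (p/2) * ((mMax γ g x) ^ ((2:ℝ)-p)) ^ (p/2) :=
            lintegral_mono_ae hae
        _ ≤ (∫⁻ x, P x) ^ (p/2) * (∫⁻ x, (mMax γ g x) ^ p) ^ ((2-p)/2) := hH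
        _ ≤ (c ^ p * R) ^ (p/2) * (c ^ p * R) ^ ((2-p)/2) :=
            mul_le_mul' (ENNReal.rpow_le_rpow hPint (by positivity))
              (ENNReal.rpow_le_rpow hGint (by positivity))
        _ = c ^ p * R := by
            rw [← rpow_add_pos _ (by positivity : (0:ℝ) < p/2)
              (by positivity : (0:ℝ) < (2-p)/2)]
            have : p/2 + (2-p)/2 = 1 := by ring
            rw [this, ENNReal.rpow_one]
    calc (∫⁻ x, (∑' k : ℤ, (mMax γ (u k) x) ^ (2:ℕ)) ^ (p/2)) ^ (1/p)
        ≤ (c ^ p * R) ^ (1/p) := ENNReal.rpow_le_rpow hmain (by positivity)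
      _ = c * R ^ (1/p) := by
          rw [ENNReal.mul_rpow_of_nonneg _ _ (by positivity : (0:ℝ) ≤ 1/p),
            ← ENNReal.rpow_mul, mul_one_div_cancel hp0.ne', ENNReal.rpow_one]
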